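/- In the setting of the stopping-cube construction: let E be a Banach lattice, μ a locally finite Borel measure on ℝ^d, D a finite collection of dyadic cubes, f: ℝ^d → E positive and locally integrable, K := ‖M̃^μ_D‖_{L^1(μ;E)→L^{1,∞}(μ;E)} < ∞, and let S be the stopping family generated by iterating, from the maximal cubes of D, the choice of maximal cubes S' ⊊ S in D with ‖sup_{Q ∈ D, S' ⊆ Q ⊆ S} ⟨f⟩^μ_Q‖_E > 2K ⟨‖f‖_E⟩^μ_S; for Q ∈ D let π_S(Q) denote the minimal cube of S containing Q. Then for every S ∈ S and every x ∈ ℝ^d, ‖sup_{Q ∈ D, π_S(Q) = S} ⟨f⟩^μ_Q 1_Q(x)‖_E ≤ 2K ⟨‖f‖_E⟩^μ_S 1_S(x). -/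

import Mathlib

open MeasureTheory ENNReal Set

attribute [local instance] Classical.propDecidable

/-- A dyadic cube in `ℝ^d`, given by a generation `k : ℤ` and a position `m : Fin d → ℤ`;
its underlying set is `∏_i [2^k m i, 2^k (m i + 1))`. -/
structure DyadicCube (d : ℕ) where
  k : ℤ
  m : Fin d → ℤ
deriving DecidableEq

/-- The underlying set of a dyadic cube. -/
def DyadicCube.set {d : ℕ} (Q : DyadicCube d) : Set (Fin d → ℝ) :=
  {x | ∀ i, (2 : ℝ) ^ Q.k * Q.m i ≤ x i ∧ x i < (2 : ℝ) ^ Q.k * (Q.m i + 1)}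

/-- A (non-dyadic) axis-parallel cube in `ℝ^d`, given by its corner and side length. -/
structure Cube (d : ℕ) where
  c : Fin d → ℝ
  len : ℝ
  len_pos : 0 < len

/-- The underlying set of an axis-parallel cube. -/
def Cube.set {d : ℕ} (Q : Cube d) : Set (Fin d → ℝ) :=
  {x | ∀ i, Q.c i ≤ x i ∧ x i < Q.c i + Q.len}

/-- The average `⟨f⟩^μ_A = (1/μ(A)) ∫_A f dμ` of a vector-valued function. -/
noncomputable def avg {d : ℕ} {E : Type*} [NormedAddCommGroup E] [NormedSpace ℝ E]
    (μ : Measure (Fin d → ℝ)) (A : Set (Fin d → ℝ)) (f : (Fin d → ℝ) → E) : E :=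
  (μ A).toReal⁻¹ • ∫ x in A, f x ∂μ

/-- The dyadic lattice Hardy–Littlewood maximal operator
`M̃^μ_D f (x) = sup_{Q ∈ D} ⟨|f|⟩^μ_Q 1_Q(x)` (a lattice supremum of finitely many
positive elements, realized as a fold of `⊔` with base point `0`). -/
noncomputable def dyadicMaximal {d : ℕ} {E : Type*} [NormedAddCommGroup E] [Lattice E] [IsOrderedAddMonoid E] [HasSolidNorm E]
    [NormedSpace ℝ E] (μ : Measure (Fin d → ℝ)) (D : Finset (DyadicCube d))
    (f : (Fin d → ℝ) → E) (x : Fin d → ℝ) : E :=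
  D.fold (· ⊔ ·) 0 fun Q => Set.indicator Q.set (fun _ => avg μ Q.set fun y => |f y|) x

/-- A collection of dyadic cubes is sparse (w.r.t. `μ`): each `Q` in the collection carries a
measurable subset `E_Q ⊆ Q` with `μ(Q) ≤ 2 μ(E_Q)`, the subsets being pairwise disjoint. -/
def IsSparse {d : ℕ} (μ : Measure (Fin d → ℝ)) (S : Finset (DyadicCube d)) : Prop :=
  ∃ ES : DyadicCube d → Set (Fin d → ℝ),
    (∀ Q ∈ S, ES Q ⊆ Q.set ∧ MeasurableSet (ES Q) ∧ μ Q.set ≤ 2 * μ (ES Q)) ∧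
    (S : Set (DyadicCube d)).Pairwise fun Q Q' => Disjoint (ES Q) (ES Q')

/-- The sparse operator `A^μ_{q,S} f (x) = (∑_{Q ∈ S} ⟨|f|⟩_Q^q 1_Q(x))^{1/q}` acting on
scalar-valued functions. -/
noncomputable def sparseOp {d : ℕ} (μ : Measure (Fin d → ℝ)) (q : ℝ)
    (S : Finset (DyadicCube d)) (f : (Fin d → ℝ) → ℝ) (x : Fin d → ℝ) : ℝ :=
  (∑ Q ∈ S, Set.indicator Q.set (fun _ => avg μ Q.set (fun y => |f y|) ^ q) x) ^ (1 / q)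

/-- `q`-convexity of a Banach lattice with constant `C`:
`‖(∑ |e k|^q)^{1/q}‖ ≤ C (∑ ‖e k‖^q)^{1/q}`. The Krivine element `(∑ |e k|^q)^{1/q}` is
characterized as the least upper bound of all combinations `∑ a k • |e k|` where the
nonnegative coefficients `a` lie in the unit ball of the norm dual to the `ℓ^q`-norm. -/
def IsQConvexWith (E : Type*) [NormedAddCommGroup E] [Lattice E] [IsOrderedAddMonoid E] [HasSolidNorm E] [NormedSpace ℝ E]
    (q C : ℝ) : Prop :=
  ∀ (n : ℕ) (e : Fin n → E) (s : E),
    IsLUB {x : E | ∃ a : Fin n → ℝ, (∀ k, 0 ≤ a k) ∧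
        (∀ t : Fin n → ℝ, (∀ k, 0 ≤ t k) → ∑ k, a k * t k ≤ (∑ k, t k ^ q) ^ (1 / q)) ∧
        x = ∑ k, a k • |e k|} s →
    ‖s‖ ≤ C * (∑ k, ‖e k‖ ^ q) ^ (1 / q)

/-- The Hardy–Littlewood property of a Banach lattice `E`: for some `p ∈ (1,∞)` the dyadic
lattice maximal operators (w.r.t. Lebesgue measure) are bounded on `L^p(dx; E)` uniformly in
the finite collection of dyadic cubes. -/
def HasHLProperty (d : ℕ) (E : Type*) [NormedAddCommGroup E] [Lattice E] [IsOrderedAddMonoid E] [HasSolidNorm E] [NormedSpace ℝ E] : Prop :=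
  ∃ p : ℝ, 1 < p ∧ ∃ C : ℝ, ∀ (D : Finset (DyadicCube d)) (f : (Fin d → ℝ) → E),
    MemLp f (ENNReal.ofReal p) volume →
    eLpNorm (dyadicMaximal volume D f) (ENNReal.ofReal p) volume ≤
      ENNReal.ofReal C * eLpNorm f (ENNReal.ofReal p) volume

/-- Order continuity of a Banach lattice: every downward directed set with infimum `0`
contains elements of arbitrarily small norm cofinally (i.e. the corresponding decreasing net
converges to `0` in norm). -/
def IsOrderContinuous (E : Type*) [NormedAddCommGroup E] [Lattice E] [IsOrderedAddMonoid E] [HasSolidNorm E] : Prop :=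
  ∀ A : Set E, A.Nonempty → DirectedOn (· ≥ ·) A → IsGLB A 0 →
    ∀ ε : ℝ, 0 < ε → ∃ a ∈ A, ∀ b ∈ A, b ≤ a → ‖b‖ < ε
/-- The Lebesgue average of `g` over `A`, valued in `ℝ≥0∞`. -/
noncomputable def scalarCubeAvg {d : ℕ} (A : Set (Fin d → ℝ)) (g : (Fin d → ℝ) → ℝ) : ℝ≥0∞ :=
  (volume A)⁻¹ * ∫⁻ x in A, ENNReal.ofReal (g x)

/-- The scalar (non-dyadic) Hardy–Littlewood maximal function, valued in `ℝ≥0∞`. -/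
noncomputable def scalarMaximal {d : ℕ} (g : (Fin d → ℝ) → ℝ) (x : Fin d → ℝ) : ℝ≥0∞ :=
  ⨆ (Q : Cube d) (_ : x ∈ Q.set), scalarCubeAvg Q.set fun y => |g y|

/-- The Muckenhoupt `A_p`-characteristic `[w]_{A_p} = sup_Q ⟨w⟩_Q ⟨w^{-1/(p-1)}⟩_Q^{p-1}`. -/
noncomputable def ApConst (d : ℕ) (p : ℝ) (w : (Fin d → ℝ) → ℝ) : ℝ≥0∞ :=
  ⨆ Q : Cube d,
    scalarCubeAvg Q.set w * scalarCubeAvg Q.set (fun x => w x ^ (-(1 / (p - 1)))) ^ (p - 1)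

/-- The Fujii–Wilson `A_∞`-characteristic `[w]_{A_∞} = sup_Q (∫_Q M(w 1_Q))/(∫_Q w)`. -/
noncomputable def AinfConst (d : ℕ) (w : (Fin d → ℝ) → ℝ) : ℝ≥0∞ :=
  ⨆ Q : Cube d, (∫⁻ x in Q.set, scalarMaximal (Q.set.indicator w) x) /
    ∫⁻ x in Q.set, ENNReal.ofReal (w x)

/-- The `A_1`-characteristic `[w]_{A_1} = sup_Q ⟨w⟩_Q ‖w⁻¹‖_{L^∞(Q)}`. -/
noncomputable def A1Const (d : ℕ) (w : (Fin d → ℝ) → ℝ) : ℝ≥0∞ :=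
  ⨆ Q : Cube d, scalarCubeAvg Q.set w *
    essSup (fun x => ENNReal.ofReal (w x)⁻¹) (volume.restrict Q.set)

/-- The measure `w dx` associated with a weight `w`. -/
noncomputable def wMeasure {d : ℕ} (w : (Fin d → ℝ) → ℝ) : Measure (Fin d → ℝ) :=
  volume.withDensity fun x => ENNReal.ofReal (w x)

/-- `g` is (a representative of) the non-dyadic lattice Hardy–Littlewood maximal function
`M̃f = sup_Q ⟨|f|⟩_Q 1_Q` (w.r.t. Lebesgue measure): `g` is strongly measurable and is the
least upper bound, in the almost-everywhere order of `L^0(dx; E)`, of the family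
`x ↦ ⟨|f|⟩_Q 1_Q(x)` indexed by all axis-parallel cubes `Q`. -/
def IsLatticeMaximalFn {d : ℕ} {E : Type*} [NormedAddCommGroup E] [Lattice E] [IsOrderedAddMonoid E] [HasSolidNorm E] [NormedSpace ℝ E]
    (f g : (Fin d → ℝ) → E) : Prop :=
  AEStronglyMeasurable g (volume : Measure (Fin d → ℝ)) ∧
  (∀ Q : Cube d, ∀ᵐ x ∂(volume : Measure (Fin d → ℝ)),
    Set.indicator Q.set (fun _ => avg volume Q.set fun y => |f y|) x ≤ g x) ∧
  ∀ h : (Fin d → ℝ) → E, AEStronglyMeasurable h (volume : Measure (Fin d → ℝ)) →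
    (∀ Q : Cube d, ∀ᵐ x ∂(volume : Measure (Fin d → ℝ)),
      Set.indicator Q.set (fun _ => avg volume Q.set fun y => |f y|) x ≤ h x) →
    ∀ᵐ x ∂(volume : Measure (Fin d → ℝ)), g x ≤ h x

/-- The lattice supremum `sup_{Q ∈ D, P Q} ⟨f⟩^μ_Q` (fold of `⊔` with base point `0`). -/
noncomputable def supAvgOver {d : ℕ} {E : Type*} [NormedAddCommGroup E] [Lattice E] [IsOrderedAddMonoid E] [HasSolidNorm E]
    [NormedSpace ℝ E] (μ : Measure (Fin d → ℝ)) (D : Finset (DyadicCube d))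
    (f : (Fin d → ℝ) → E) (P : DyadicCube d → Prop) : E :=
  (D.filter P).fold (· ⊔ ·) 0 fun Q => avg μ Q.set f

/-- The Muckenhoupt–Wheeden type stopping condition:
`‖sup_{Q ∈ D, S' ⊆ Q ⊆ S} ⟨f⟩^μ_Q‖ > 2 K ⟨‖f‖⟩^μ_S`. -/
def StopCond {d : ℕ} {E : Type*} [NormedAddCommGroup E] [Lattice E] [IsOrderedAddMonoid E] [HasSolidNorm E] [NormedSpace ℝ E]
    (μ : Measure (Fin d → ℝ)) (D : Finset (DyadicCube d)) (f : (Fin d → ℝ) → E) (K : ℝ)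
    (S' S : DyadicCube d) : Prop :=
  2 * K * avg μ S.set (fun y => ‖f y‖) <
    ‖supAvgOver μ D f fun Q => S'.set ⊆ Q.set ∧ Q.set ⊆ S.set‖

/-- The stopping children of `S`: maximal cubes `S' ∈ D`, `S' ⊊ S`, satisfying the stopping
condition. -/
noncomputable def stopChildren {d : ℕ} {E : Type*} [NormedAddCommGroup E] [Lattice E] [IsOrderedAddMonoid E] [HasSolidNorm E]
    [NormedSpace ℝ E] (μ : Measure (Fin d → ℝ)) (D : Finset (DyadicCube d))
    (f : (Fin d → ℝ) → E) (K : ℝ) (S : DyadicCube d) : Finset (DyadicCube d) :=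
  D.filter fun S' => S'.set ⊂ S.set ∧ StopCond μ D f K S' S ∧
    ∀ S'' ∈ D, S''.set ⊂ S.set → StopCond μ D f K S'' S → S'.set ⊆ S''.set → S'' = S'

/-- The generations of stopping cubes: generation `0` consists of the maximal cubes of `D`,
and generation `k+1` consists of the stopping children of the cubes of generation `k`. -/
noncomputable def stopLayer {d : ℕ} {E : Type*} [NormedAddCommGroup E] [Lattice E] [IsOrderedAddMonoid E] [HasSolidNorm E]
    [NormedSpace ℝ E] (μ : Measure (Fin d → ℝ)) (D : Finset (DyadicCube d))
    (f : (Fin d → ℝ) → E) (K : ℝ) : ℕ → Finset (DyadicCube d)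
  | 0 => D.filter fun Q => ∀ Q' ∈ D, Q.set ⊆ Q'.set → Q'.set ⊆ Q.set
  | k + 1 => (stopLayer μ D f K k).biUnion (stopChildren μ D f K)

/-- The family of stopping cubes `𝒮 = ⋃_k 𝒮_k`. -/
noncomputable def stopFamily {d : ℕ} {E : Type*} [NormedAddCommGroup E] [Lattice E] [IsOrderedAddMonoid E] [HasSolidNorm E]
    [NormedSpace ℝ E] (μ : Measure (Fin d → ℝ)) (D : Finset (DyadicCube d))
    (f : (Fin d → ℝ) → E) (K : ℝ) : Finset (DyadicCube d) :=
  D.filter fun Q => ∃ k, Q ∈ stopLayer μ D f K k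

/-- `S` is the stopping parent of `Q` w.r.t. the family `𝒮`: the minimal cube of `𝒮`
containing `Q`. -/
def IsStopParent {d : ℕ} (𝒮 : Finset (DyadicCube d)) (Q S : DyadicCube d) : Prop :=
  S ∈ 𝒮 ∧ Q.set ⊆ S.set ∧ ∀ S' ∈ 𝒮, Q.set ⊆ S'.set → S.set ⊆ S'.set

/-- The lattice supremum `sup_{Q ∈ D, P Q} ⟨f⟩^μ_Q 1_Q(x)`. -/
noncomputable def supIndAvgOver {d : ℕ} {E : Type*} [NormedAddCommGroup E] [Lattice E] [IsOrderedAddMonoid E] [HasSolidNorm E]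
    [NormedSpace ℝ E] (μ : Measure (Fin d → ℝ)) (D : Finset (DyadicCube d))
    (f : (Fin d → ℝ) → E) (P : DyadicCube d → Prop) (x : Fin d → ℝ) : E :=
  (D.filter P).fold (· ⊔ ·) 0 fun Q => Set.indicator Q.set (fun _ => avg μ Q.set f) x

section AuxLemmas

variable {d : ℕ}

/-- The lower-left corner of a dyadic cube belongs to the cube. -/
lemma DyadicCube.corner_mem (Q : DyadicCube d) :
    (fun i => (2 : ℝ) ^ Q.k * Q.m i) ∈ Q.set := by
  intro i
  have h2 : (0:ℝ) < 2 ^ Q.k := zpow_pos two_pos _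
  refine ⟨le_rfl, ?_⟩
  show (2 : ℝ) ^ Q.k * Q.m i < (2 : ℝ) ^ Q.k * (Q.m i + 1)
  have : (Q.m i : ℝ) < Q.m i + 1 := by linarith
  nlinarith

/-- Dyadic nestedness: if two dyadic cubes share a point and `P.k ≤ Q.k`,
then `P.set ⊆ Q.set`. -/
lemma DyadicCube.subset_of_k_le {P Q : DyadicCube d} {x : Fin d → ℝ}
    (hxP : x ∈ P.set) (hxQ : x ∈ Q.set) (hk : P.k ≤ Q.k) : P.set ⊆ Q.set := by
  intro y hy i
  obtain ⟨h1, h2⟩ := hxP i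
  obtain ⟨h3, h4⟩ := hxQ i
  obtain ⟨h5, h6⟩ := hy i
  have hp : (0:ℝ) < 2 ^ P.k := zpow_pos two_pos _
  set r : ℕ := (Q.k - P.k).toNat with hr
  have hrq : P.k + (r : ℤ) = Q.k := by
    rw [hr, Int.toNat_of_nonneg (by omega)]; ring
  have hq2 : (2:ℝ) ^ Q.k = 2 ^ P.k * 2 ^ r := by
    rw [← zpow_natCast (2:ℝ) r, ← zpow_add₀ (two_ne_zero), hrq]
  have i1 : (2:ℝ) ^ r * (Q.m i : ℝ) < (P.m i : ℝ) + 1 := by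
    have h := lt_of_le_of_lt h3 h2
    rw [hq2, mul_assoc] at h
    exact (mul_lt_mul_iff_right₀ hp).mp h
  have i1' : (2:ℤ) ^ r * Q.m i ≤ P.m i := by
    have : (2:ℤ) ^ r * Q.m i < P.m i + 1 := by exact_mod_cast i1
    omega
  have i2 : (P.m i : ℝ) < (2:ℝ) ^ r * ((Q.m i : ℝ) + 1) := by
    have h := lt_of_le_of_lt h1 h4
    rw [hq2, mul_assoc] at h
    exact (mul_lt_mul_iff_right₀ hp).mp h
  have i2' : P.m i + 1 ≤ (2:ℤ) ^ r * (Q.m i + 1) := by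
    have : (P.m i : ℤ) < 2 ^ r * (Q.m i + 1) := by exact_mod_cast i2
    omega
  constructor
  · have hcast : ((2:ℝ) ^ r * (Q.m i : ℝ)) ≤ (P.m i : ℝ) := by exact_mod_cast i1'
    have : (2:ℝ) ^ Q.k * Q.m i ≤ 2 ^ P.k * P.m i := by
      rw [hq2, mul_assoc]; nlinarith
    linarith
  · have hcast : ((P.m i : ℝ) + 1) ≤ (2:ℝ) ^ r * ((Q.m i : ℝ) + 1) := by exact_mod_cast i2'
    have : (2:ℝ) ^ P.k * ((P.m i : ℝ) + 1) ≤ 2 ^ Q.k * ((Q.m i : ℝ) + 1) := by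
      rw [hq2, mul_assoc]; nlinarith
    linarith

lemma DyadicCube.k_le_of_subset (hd : 1 ≤ d) {P Q : DyadicCube d}
    (hPQ : P.set ⊆ Q.set) (hQP : Q.set ⊆ P.set) : P.k ≤ Q.k := by
  by_contra hlt
  push_neg at hlt
  set j : Fin d := ⟨0, hd⟩
  have hc : ∀ i, (2:ℝ) ^ Q.k * Q.m i = 2 ^ P.k * P.m i := fun i =>
    le_antisymm ((hPQ (DyadicCube.corner_mem P)) i).1 ((hQP (DyadicCube.corner_mem Q)) i).1
  have h2Q : (0:ℝ) < 2 ^ Q.k := zpow_pos two_pos _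
  have h2lt : (2:ℝ) ^ Q.k < 2 ^ P.k := zpow_lt_zpow_right₀ one_lt_two hlt
  set z : Fin d → ℝ :=
    Function.update (fun i => (2:ℝ) ^ P.k * P.m i) j ((2:ℝ) ^ P.k * P.m j + 2 ^ Q.k) with hz
  have hzP : z ∈ P.set := by
    intro i
    by_cases hij : i = j
    · subst hij
      simp only [hz, Function.update_self]
      constructor
      · linarith
      · have h9 : (2:ℝ) ^ P.k * ((P.m j : ℝ) + 1) = 2 ^ P.k * P.m j + 2 ^ P.k := by ring
        linarith [h9]
    · simp only [hz, Function.update_of_ne hij]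
      exact DyadicCube.corner_mem P i
  have hzQ := (hPQ hzP) j
  have hzj : z j = (2:ℝ) ^ P.k * P.m j + 2 ^ Q.k := by simp [hz]
  have hQup : (2:ℝ) ^ Q.k * ((Q.m j : ℝ) + 1) = 2 ^ P.k * P.m j + 2 ^ Q.k := by
    have := hc j; nlinarith [this]
  rw [hzj, hQup] at hzQ
  exact lt_irrefl _ hzQ.2

/-- For `d ≥ 1`, a dyadic cube is determined by its underlying set. -/
lemma DyadicCube.set_inj (hd : 1 ≤ d) {P Q : DyadicCube d} (h : P.set = Q.set) : P = Q := by
  have hPQ : P.set ⊆ Q.set := h.le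
  have hQP : Q.set ⊆ P.set := h.ge
  have hk : P.k = Q.k :=
    le_antisymm (DyadicCube.k_le_of_subset hd hPQ hQP) (DyadicCube.k_le_of_subset hd hQP hPQ)
  have hc : ∀ i, (2:ℝ) ^ Q.k * (Q.m i : ℝ) = 2 ^ P.k * P.m i := fun i =>
    le_antisymm ((hPQ (DyadicCube.corner_mem P)) i).1 ((hQP (DyadicCube.corner_mem Q)) i).1
  have hm : ∀ i, P.m i = Q.m i := by
    intro i
    have h2 : (0:ℝ) < 2 ^ P.k := zpow_pos two_pos _
    have := hc i
    rw [← hk] at this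
    have h3 : (Q.m i : ℝ) = (P.m i : ℝ) := mul_left_cancel₀ (ne_of_gt h2) this
    exact_mod_cast h3.symm
  obtain ⟨pk, pm⟩ := P
  obtain ⟨qk, qm⟩ := Q
  simp only [DyadicCube.mk.injEq]
  exact ⟨hk, funext hm⟩

lemma DyadicCube.measurableSet_set (Q : DyadicCube d) : MeasurableSet Q.set := by
  have : Q.set = Set.pi Set.univ
      (fun i => Set.Ico ((2:ℝ) ^ Q.k * Q.m i) ((2:ℝ) ^ Q.k * (Q.m i + 1))) := by
    ext x
    simp [DyadicCube.set, Set.mem_pi, Set.mem_Ico]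
  rw [this]
  exact MeasurableSet.univ_pi fun i => measurableSet_Ico

lemma DyadicCube.subset_Icc (Q : DyadicCube d) :
    Q.set ⊆ Set.Icc (fun i => (2:ℝ) ^ Q.k * Q.m i) (fun i => (2:ℝ) ^ Q.k * (Q.m i + 1)) :=
  fun x hx => ⟨fun i => (hx i).1, fun i => le_of_lt (hx i).2⟩

lemma DyadicCube.measure_lt_top (Q : DyadicCube d) (μ : Measure (Fin d → ℝ))
    [IsLocallyFiniteMeasure μ] : μ Q.set < ⊤ :=
  lt_of_le_of_lt (measure_mono Q.subset_Icc) isCompact_Icc.measure_lt_top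

end AuxLemmas

section FoldLemmas

variable {E : Type*} [Lattice E] {ι : Type*}

lemma base_le_fold (s : Finset ι) (g : ι → E) (z : E) : z ≤ Finset.fold (β := E) (· ⊔ ·) z g s := by
  classical
  induction s using Finset.induction_on with
  | empty => simp
  | insert _ _ h ih => rw [Finset.fold_insert h]; exact ih.trans le_sup_right

lemma le_fold_of_mem {s : Finset ι} {g : ι → E} {z : E} {b : ι} (hb : b ∈ s) :
    g b ≤ Finset.fold (β := E) (· ⊔ ·) z g s := by
  classical
  induction s using Finset.induction_on with
  | empty => simp at hb
  | insert _ _ h ih =>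
    rw [Finset.fold_insert h]
    rcases Finset.mem_insert.mp hb with rfl | hb'
    · exact le_sup_left
    · exact (ih hb').trans le_sup_right

lemma fold_le_of_forall {s : Finset ι} {g : ι → E} {z c : E} (hz : z ≤ c)
    (h : ∀ b ∈ s, g b ≤ c) : Finset.fold (β := E) (· ⊔ ·) z g s ≤ c := by
  classical
  induction s using Finset.induction_on with
  | empty => simpa
  | insert _ _ hmem ih =>
    rw [Finset.fold_insert hmem]
    exact sup_le (h _ (Finset.mem_insert_self _ _))
      (ih fun b hb => h b (Finset.mem_insert_of_mem hb))

end FoldLemmas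

section MainAux

variable {d : ℕ} {E : Type*} [NormedAddCommGroup E] [Lattice E] [IsOrderedAddMonoid E] [HasSolidNorm E] [NormedSpace ℝ E]
  [CompleteSpace E]

lemma avg_norm_nonneg (μ : Measure (Fin d → ℝ)) (A : Set (Fin d → ℝ))
    (f : (Fin d → ℝ) → E) : 0 ≤ avg μ A (fun y => ‖f y‖) := by
  rw [avg, smul_eq_mul]
  exact mul_nonneg (inv_nonneg.2 ENNReal.toReal_nonneg)
    (integral_nonneg fun y => norm_nonneg (f y))

lemma norm_avg_le (μ : Measure (Fin d → ℝ)) (A : Set (Fin d → ℝ))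
    (f : (Fin d → ℝ) → E) : ‖avg μ A f‖ ≤ avg μ A (fun y => ‖f y‖) := by
  rw [avg, avg, smul_eq_mul, norm_smul, Real.norm_eq_abs,
    abs_of_nonneg (inv_nonneg.2 ENNReal.toReal_nonneg)]
  exact mul_le_mul_of_nonneg_left (norm_integral_le_integral_norm _)
    (inv_nonneg.2 ENNReal.toReal_nonneg)

/-- If some cube of `D` has positive measure and `E` is nontrivial, then the weak (1,1)
constant of the dyadic maximal operator is at least 1. -/
lemma one_le_weak_const [Nontrivial E] (μ : Measure (Fin d → ℝ)) [IsLocallyFiniteMeasure μ]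
    (D : Finset (DyadicCube d)) (K : ℝ) (hK0 : 0 ≤ K)
    (hKweak : ∀ g : (Fin d → ℝ) → E, Integrable g μ → ∀ lam : ℝ, 0 < lam →
      ENNReal.ofReal lam * μ {x | lam < ‖dyadicMaximal μ D g x‖} ≤
        ENNReal.ofReal K * ∫⁻ x, ‖g x‖₊ ∂μ)
    {Q : DyadicCube d} (hQ : Q ∈ D) (h0 : μ Q.set ≠ 0) : 1 ≤ K := by
  obtain ⟨e₀, he₀⟩ := exists_ne (0 : E)
  set e : E := |e₀| with he
  have hepos : 0 ≤ e := abs_nonneg e₀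
  have henorm : 0 < ‖e‖ := by
    rw [he, norm_abs_eq_norm]
    exact norm_pos_iff.mpr he₀
  have htop : μ Q.set ≠ ⊤ := (Q.measure_lt_top μ).ne
  have hA : MeasurableSet Q.set := Q.measurableSet_set
  set g : (Fin d → ℝ) → E := Q.set.indicator (fun _ => e) with hg
  have hgint : Integrable g μ :=
    (integrableOn_const (Q.measure_lt_top μ).ne).integrable_indicator hA
  have habs : (fun y => |g y|) = g := by
    funext y
    by_cases hy : y ∈ Q.set
    · simp [hg, Set.indicator_of_mem hy, abs_of_nonneg hepos]
    · simp [hg, Set.indicator_of_notMem hy]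
  set c : ℝ := (μ Q.set).toReal with hc
  have hcpos : 0 < c := ENNReal.toReal_pos h0 htop
  have havg : avg μ Q.set (fun y => |g y|) = e := by
    rw [habs, avg]
    have : ∫ x in Q.set, g x ∂μ = ∫ x in Q.set, e ∂μ :=
      setIntegral_congr_fun hA fun x hx => by simp [hg, Set.indicator_of_mem hx]
    rw [this, setIntegral_const, measureReal_def, smul_smul, inv_mul_cancel₀ (ne_of_gt hcpos), one_smul]
  have hsub : ∀ lam : ℝ, lam < ‖e‖ →
      Q.set ⊆ {x | lam < ‖dyadicMaximal μ D g x‖} := by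
    intro lam hlam x hx
    have h1 : e ≤ dyadicMaximal μ D g x := by
      have h0' := le_fold_of_mem (g := fun R => Set.indicator R.set
        (fun _ => avg μ R.set fun y => |g y|) x) (z := (0:E)) hQ
      simp only [Set.indicator_of_mem hx] at h0'
      rw [havg] at h0'
      exact h0'
    have h2 : (0:E) ≤ dyadicMaximal μ D g x := base_le_fold _ _ _
    have h3 : ‖e‖ ≤ ‖dyadicMaximal μ D g x‖ := by
      apply HasSolidNorm.solid
      rw [abs_of_nonneg hepos, abs_of_nonneg h2]
      exact h1
    exact lt_of_lt_of_le hlam h3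
  have hlint : ∫⁻ x, ‖g x‖₊ ∂μ = ‖e‖₊ * μ Q.set := by
    have hpt : ∀ x, (‖g x‖₊ : ℝ≥0∞) =
        Q.set.indicator (fun _ => (‖e‖₊ : ℝ≥0∞)) x := by
      intro x
      by_cases hx : x ∈ Q.set
      · simp [hg, Set.indicator_of_mem hx]
      · simp [hg, Set.indicator_of_notMem hx]
    calc ∫⁻ x, ‖g x‖₊ ∂μ
        = ∫⁻ x, Q.set.indicator (fun _ => (‖e‖₊ : ℝ≥0∞)) x ∂μ := lintegral_congr hpt
      _ = ∫⁻ _ in Q.set, (‖e‖₊ : ℝ≥0∞) ∂μ := lintegral_indicator hA _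
      _ = ‖e‖₊ * μ Q.set := setLIntegral_const _ _
  have hkey : ∀ lam : ℝ, 0 < lam → lam < ‖e‖ → lam * c ≤ K * (‖e‖ * c) := by
    intro lam hlam0 hlam
    have h := hKweak g hgint lam hlam0
    have h2 : ENNReal.ofReal lam * μ Q.set ≤ ENNReal.ofReal K * (‖e‖₊ * μ Q.set) := by
      rw [← hlint]
      exact le_trans (mul_le_mul_right (measure_mono (hsub lam hlam)) _) h
    have hfin : ENNReal.ofReal K * (‖e‖₊ * μ Q.set) ≠ ⊤ :=
      ENNReal.mul_ne_top ENNReal.ofReal_ne_top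
        (ENNReal.mul_ne_top ENNReal.coe_ne_top htop)
    have := ENNReal.toReal_le_toReal
      (ENNReal.mul_ne_top ENNReal.ofReal_ne_top htop) hfin |>.mpr h2
    rw [ENNReal.toReal_mul, ENNReal.toReal_mul, ENNReal.toReal_mul,
      ENNReal.toReal_ofReal hlam0.le, ENNReal.toReal_ofReal hK0] at this
    simpa [coe_nnnorm, hc] using this
  by_contra hK1
  push_neg at hK1
  have hlam0 : 0 < (K + 1) / 2 * ‖e‖ := by nlinarith
  have hlam1 : (K + 1) / 2 * ‖e‖ < ‖e‖ := by nlinarith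
  have := hkey _ hlam0 hlam1
  nlinarith

end MainAux

section StopCondAux

variable {d : ℕ} {E : Type*} [NormedAddCommGroup E] [Lattice E] [IsOrderedAddMonoid E] [HasSolidNorm E] [NormedSpace ℝ E]
  [CompleteSpace E]

/-- The stopping condition fails at the stopping parent. -/
lemma not_stopCond_of_isStopParent (hd : 1 ≤ d) (μ : Measure (Fin d → ℝ))
    [IsLocallyFiniteMeasure μ] (D : Finset (DyadicCube d)) (f : (Fin d → ℝ) → E)
    (K : ℝ) (hK0 : 0 ≤ K)
    (hKweak : ∀ g : (Fin d → ℝ) → E, Integrable g μ → ∀ lam : ℝ, 0 < lam →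
      ENNReal.ofReal lam * μ {x | lam < ‖dyadicMaximal μ D g x‖} ≤
        ENNReal.ofReal K * ∫⁻ x, ‖g x‖₊ ∂μ)
    {S Q₀ : DyadicCube d} (hS : S ∈ stopFamily μ D f K) (hQ₀D : Q₀ ∈ D)
    (hpar : IsStopParent (stopFamily μ D f K) Q₀ S) :
    ¬ StopCond μ D f K Q₀ S := by
  intro hstop
  obtain ⟨hS𝒮, hsub, hmin⟩ := hpar
  have hSD : S ∈ D := (Finset.mem_filter.mp hS).1
  by_cases heq : Q₀.set = S.set
  · -- `Q₀` fills all of `S`; the stopping condition fails by the weak (1,1) bound.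
    unfold StopCond at hstop
    set m := avg μ S.set (fun y => ‖f y‖) with hm
    have hm0 : 0 ≤ m := avg_norm_nonneg μ S.set f
    have hW : ‖avg μ S.set f ⊔ 0‖ ≤ m := by
      have h1 : |avg μ S.set f ⊔ 0| ≤ |avg μ S.set f| := by
        rw [abs_of_nonneg le_sup_right]
        exact sup_le (le_abs_self _) (abs_nonneg _)
      exact (HasSolidNorm.solid h1).trans (norm_avg_le μ S.set f)
    have h0V : (0:E) ≤ supAvgOver μ D f (fun Q => Q₀.set ⊆ Q.set ∧ Q.set ⊆ S.set) := by
      unfold supAvgOver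
      exact base_le_fold _ _ _
    have hVW : supAvgOver μ D f (fun Q => Q₀.set ⊆ Q.set ∧ Q.set ⊆ S.set) ≤
        avg μ S.set f ⊔ 0 := by
      unfold supAvgOver
      apply fold_le_of_forall le_sup_right
      intro Q hQ
      simp only [Finset.mem_filter] at hQ
      have h2 := hQ.2
      have hQS : Q.set = S.set := Set.Subset.antisymm h2.2 (by rw [← heq]; exact h2.1)
      rw [hQS]
      exact le_sup_left
    have hV : ‖supAvgOver μ D f (fun Q => Q₀.set ⊆ Q.set ∧ Q.set ⊆ S.set)‖ ≤ m := by
      refine (HasSolidNorm.solid ?_).trans hW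
      rw [abs_of_nonneg h0V, abs_of_nonneg (h0V.trans hVW)]
      exact hVW
    rcases eq_or_lt_of_le hm0 with hmz | hmpos
    · rw [← hmz] at hstop hV
      linarith
    · have hμ0 : μ S.set ≠ 0 := by
        intro hz
        rw [hm, avg, hz] at hmpos
        simp at hmpos
      rcases subsingleton_or_nontrivial E with hE | hE
      · have hzero : supAvgOver μ D f (fun Q => Q₀.set ⊆ Q.set ∧ Q.set ⊆ S.set) = (0:E) :=
          Subsingleton.elim _ _
        rw [hzero, norm_zero] at hstop
        nlinarith
      · have hK1 : 1 ≤ K := one_le_weak_const μ D K hK0 hKweak hSD hμ0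
        nlinarith
  · -- `Q₀ ⊊ S`: a maximal stopping cube above `Q₀` would be a stopping child,
    -- contradicting minimality of the stopping parent.
    have hss : Q₀.set ⊂ S.set := hsub.ssubset_of_ne heq
    set A := D.filter (fun R => R.set ⊂ S.set ∧ StopCond μ D f K R S ∧ Q₀.set ⊆ R.set) with hA
    have hQA : Q₀ ∈ A := Finset.mem_filter.mpr ⟨hQ₀D, hss, hstop, subset_rfl⟩
    obtain ⟨R, hRA, hRmax⟩ := A.exists_max_image (fun R => R.k) ⟨Q₀, hQA⟩
    obtain ⟨hRD, hRss, hRstop, hQ₀R⟩ := Finset.mem_filter.mp hRA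
    have hRchild : R ∈ stopChildren μ D f K S := by
      unfold stopChildren
      refine Finset.mem_filter.mpr ⟨hRD, hRss, hRstop, ?_⟩
      intro S'' hS''D hS''ss hS''stop hRS''
      have hS''A : S'' ∈ A :=
        Finset.mem_filter.mpr ⟨hS''D, hS''ss, hS''stop, hQ₀R.trans hRS''⟩
      have hk := hRmax S'' hS''A
      have hx : (fun i => (2:ℝ) ^ Q₀.k * Q₀.m i) ∈ R.set := hQ₀R (DyadicCube.corner_mem Q₀)
      have hx' : (fun i => (2:ℝ) ^ Q₀.k * Q₀.m i) ∈ S''.set := hRS'' hx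
      exact DyadicCube.set_inj hd
        (Set.Subset.antisymm (DyadicCube.subset_of_k_le hx' hx hk) hRS'')
    obtain ⟨k, hk⟩ := (Finset.mem_filter.mp hS).2
    have hRfam : R ∈ stopFamily μ D f K :=
      Finset.mem_filter.mpr ⟨hRD, k + 1, Finset.mem_biUnion.mpr ⟨S, hk, hRchild⟩⟩
    exact hRss.not_subset (hmin R hRfam hQ₀R)

end StopCondAux

/-- from the proof of Theorem 1.4: the pointwise estimate (4.2) /
`eq:pointwise`. With `K` the `L^1(μ;E) → L^{1,∞}(μ;E)` norm of `M̃^μ_D` and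
`𝒮 = stopFamily μ D f K` the stopping family, for every `S ∈ 𝒮` and every `x`:
`‖sup_{Q ∈ D, π_𝒮(Q) = S} ⟨f⟩^μ_Q 1_Q(x)‖ ≤ 2K ⟨‖f‖⟩^μ_S 1_S(x)`. -/
theorem stopFamily_pointwise_estimate
    {d : ℕ} (hd : 1 ≤ d)
    (E : Type*) [NormedAddCommGroup E] [Lattice E] [IsOrderedAddMonoid E] [HasSolidNorm E] [NormedSpace ℝ E] [CompleteSpace E]
    (μ : Measure (Fin d → ℝ)) [IsLocallyFiniteMeasure μ]
    (D : Finset (DyadicCube d)) (f : (Fin d → ℝ) → E)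
    (hfpos : ∀ x, 0 ≤ f x) (hf : LocallyIntegrable f μ)
    (K : ℝ) (hK0 : 0 ≤ K)
    (hKweak : ∀ g : (Fin d → ℝ) → E, Integrable g μ → ∀ lam : ℝ, 0 < lam →
      ENNReal.ofReal lam * μ {x | lam < ‖dyadicMaximal μ D g x‖} ≤
        ENNReal.ofReal K * ∫⁻ x, ‖g x‖₊ ∂μ)
    (hKmin : ∀ K' : ℝ, 0 ≤ K' →
      (∀ g : (Fin d → ℝ) → E, Integrable g μ → ∀ lam : ℝ, 0 < lam →
        ENNReal.ofReal lam * μ {x | lam < ‖dyadicMaximal μ D g x‖} ≤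
          ENNReal.ofReal K' * ∫⁻ x, ‖g x‖₊ ∂μ) → K ≤ K') :
    ∀ S ∈ stopFamily μ D f K, ∀ x : Fin d → ℝ,
      ‖supIndAvgOver μ D f (fun Q => IsStopParent (stopFamily μ D f K) Q S) x‖ ≤
        2 * K * Set.indicator S.set (fun _ => avg μ S.set fun y => ‖f y‖) x := by
  intro S hS x
  have hSD : S ∈ D := (Finset.mem_filter.mp hS).1
  by_cases hxS : x ∈ S.set
  · rw [Set.indicator_of_mem hxS]
    by_cases hex : ∃ Q₁, Q₁ ∈ D.filter (fun Q => IsStopParent (stopFamily μ D f K) Q S) ∧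
        x ∈ Q₁.set
    · obtain ⟨Q₁, hQ₁, hxQ₁⟩ := hex
      obtain ⟨Q₀, hQ₀T', hQ₀min⟩ :=
        ((D.filter (fun Q => IsStopParent (stopFamily μ D f K) Q S)).filter
          (fun Q => x ∈ Q.set)).exists_min_image (fun Q => Q.k)
          ⟨Q₁, Finset.mem_filter.mpr ⟨hQ₁, hxQ₁⟩⟩
      have hQ₀T := (Finset.mem_filter.mp hQ₀T').1
      have hxQ₀ : x ∈ Q₀.set := (Finset.mem_filter.mp hQ₀T').2
      have hQ₀D : Q₀ ∈ D := (Finset.mem_filter.mp hQ₀T).1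
      have hQ₀par : IsStopParent (stopFamily μ D f K) Q₀ S := (Finset.mem_filter.mp hQ₀T).2
      have hLV : supIndAvgOver μ D f (fun Q => IsStopParent (stopFamily μ D f K) Q S) x ≤
          supAvgOver μ D f (fun Q => Q₀.set ⊆ Q.set ∧ Q.set ⊆ S.set) := by
        unfold supIndAvgOver supAvgOver
        apply fold_le_of_forall (base_le_fold _ _ _)
        intro Q hQ
        by_cases hxQ : x ∈ Q.set
        · rw [Set.indicator_of_mem hxQ]
          have hQpar : IsStopParent (stopFamily μ D f K) Q S := (Finset.mem_filter.mp hQ).2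
          refine le_fold_of_mem (z := (0:E)) (g := fun Q => avg μ Q.set f) (b := Q) ?_
          simp only [Finset.mem_filter]
          exact
            ⟨(Finset.mem_filter.mp hQ).1,
              DyadicCube.subset_of_k_le hxQ₀ hxQ (hQ₀min Q (Finset.mem_filter.mpr ⟨hQ, hxQ⟩)),
              hQpar.2.1⟩
        · rw [Set.indicator_of_notMem hxQ]
          exact base_le_fold _ _ _
      have h0L : (0:E) ≤
          supIndAvgOver μ D f (fun Q => IsStopParent (stopFamily μ D f K) Q S) x :=
        base_le_fold _ _ _
      have hnorm : ‖supIndAvgOver μ D f (fun Q => IsStopParent (stopFamily μ D f K) Q S) x‖ ≤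
          ‖supAvgOver μ D f (fun Q => Q₀.set ⊆ Q.set ∧ Q.set ⊆ S.set)‖ := by
        apply HasSolidNorm.solid
        rw [abs_of_nonneg h0L, abs_of_nonneg (h0L.trans hLV)]
        exact hLV
      have hnot := not_stopCond_of_isStopParent hd μ D f K hK0 hKweak hS hQ₀D hQ₀par
      unfold StopCond at hnot
      push_neg at hnot
      exact hnorm.trans hnot
    · push_neg at hex
      have hz : supIndAvgOver μ D f (fun Q => IsStopParent (stopFamily μ D f K) Q S) x = 0 := by
        unfold supIndAvgOver
        refine le_antisymm (fold_le_of_forall le_rfl ?_) (base_le_fold _ _ _)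
        intro Q hQ
        rw [Set.indicator_of_notMem (hex Q hQ)]
      rw [hz, norm_zero]
      exact mul_nonneg (by linarith) (avg_norm_nonneg μ S.set f)
  · rw [Set.indicator_of_notMem hxS, mul_zero]
    have hz : supIndAvgOver μ D f (fun Q => IsStopParent (stopFamily μ D f K) Q S) x = 0 := by
      unfold supIndAvgOver
      refine le_antisymm (fold_le_of_forall le_rfl ?_) (base_le_fold _ _ _)
      intro Q hQ
      have hQpar : IsStopParent (stopFamily μ D f K) Q S := (Finset.mem_filter.mp hQ).2
      rw [Set.indicator_of_notMem (fun hxQ => hxS (hQpar.2.1 hxQ))]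
    rw [hz, norm_zero]
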